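/- Fix u, v ∈ ℂ with u − v ∉ {0, c, −c, cκ, −cκ}, and suppose T(u), T(v) ∈ M_N(A) satisfy the RTT relation at (u,v). Then the traces commute: [ Σ_{i=−n}^{n} T_{i,i}(u), Σ_{j=−n}^{n} T_{j,j}(v) ] = 0 in A. -/

import Mathlib

open scoped Kronecker

noncomputable section

/-- Index set `{-n, …, n}` for matrices of size `N = 2n+1`. -/
abbrev Idx (n : ℕ) : Type := {i : ℤ // i ∈ Finset.Icc (-(n : ℤ)) (n : ℤ)}

/-- Negation `i ↦ -i` on the index set. -/
def Idx.neg {n : ℕ} (i : Idx n) : Idx n :=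
  ⟨-i.1, by
    have h := Finset.mem_Icc.mp i.2
    exact Finset.mem_Icc.mpr ⟨by omega, by omega⟩⟩

/-- Matrix unit `e_{i,j}`. -/
def matE {n : ℕ} (i j : Idx n) : Matrix (Idx n) (Idx n) ℂ :=
  Matrix.single i j 1

/-- `P = Σ_{i,j} e_{i,j} ⊗ e_{j,i}`. -/
def Pmat (n : ℕ) : Matrix (Idx n × Idx n) (Idx n × Idx n) ℂ :=
  ∑ i : Idx n, ∑ j : Idx n, matE i j ⊗ₖ matE j i

/-- `Q = Σ_{i,j} e_{i,j} ⊗ e_{-i,-j}`. -/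
def Qmat (n : ℕ) : Matrix (Idx n × Idx n) (Idx n × Idx n) ℂ :=
  ∑ i : Idx n, ∑ j : Idx n, matE i j ⊗ₖ matE i.neg j.neg

lemma matE_apply {n : ℕ} (i j a b : Idx n) :
    matE i j a b = if i = a ∧ j = b then 1 else 0 := rfl

lemma Pmat_apply (n : ℕ) (p q : Idx n × Idx n) :
    Pmat n p q = if p.1 = q.2 ∧ p.2 = q.1 then 1 else 0 := by
  simp only [Pmat, Matrix.sum_apply, Matrix.kroneckerMap_apply, matE_apply]
  rw [Fintype.sum_eq_single p.1 (fun i hi => by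
    rw [Finset.sum_eq_zero]; intro j _
    rw [if_neg (fun h => hi h.1), zero_mul])]
  rw [Fintype.sum_eq_single q.1 (fun j hj => by
    rw [if_neg (fun h => hj h.2), zero_mul])]
  by_cases h1 : p.1 = q.2 <;> by_cases h2 : p.2 = q.1 <;>
    simp_all [eq_comm] <;> aesop

lemma Qmat_apply (n : ℕ) (p q : Idx n × Idx n) :
    Qmat n p q = if p.2 = p.1.neg ∧ q.2 = q.1.neg then 1 else 0 := by
  simp only [Qmat, Matrix.sum_apply, Matrix.kroneckerMap_apply, matE_apply]
  rw [Fintype.sum_eq_single p.1 (fun i hi => by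
    rw [Finset.sum_eq_zero]; intro j _
    rw [if_neg (fun h => hi h.1), zero_mul])]
  rw [Fintype.sum_eq_single q.1 (fun j hj => by
    rw [if_neg (fun h => hj h.2), zero_mul])]
  by_cases h1 : p.2 = p.1.neg <;> by_cases h2 : q.2 = q.1.neg <;>
    simp_all [eq_comm] <;> aesop

lemma Idx.neg_neg {n : ℕ} (i : Idx n) : i.neg.neg = i := by
  apply Subtype.ext; simp [Idx.neg]

lemma Idx.neg_eq_iff {n : ℕ} (i j : Idx n) : i = j.neg ↔ j = i.neg := by
  constructor <;> (rintro rfl; rw [Idx.neg_neg])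

lemma P_mul_P (n : ℕ) : Pmat n * Pmat n = 1 := by
  ext p r
  simp only [Matrix.mul_apply, Pmat_apply]
  rw [Fintype.sum_eq_single (p.2, p.1) (fun q hq => by
    have : ¬(p.1 = q.2 ∧ p.2 = q.1) := fun h => hq (Prod.ext h.2.symm h.1.symm)
    simp [this])]
  simp [Matrix.one_apply, Prod.ext_iff, and_comm]

lemma P_mul_Q (n : ℕ) : Pmat n * Qmat n = Qmat n := by
  ext p r
  simp only [Matrix.mul_apply, Pmat_apply, Qmat_apply]
  rw [Fintype.sum_eq_single (p.2, p.1) (fun q hq => by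
    have : ¬(p.1 = q.2 ∧ p.2 = q.1) := fun h => hq (Prod.ext h.2.symm h.1.symm)
    simp [this])]
  have e1 : (p.1 = p.2.neg ∧ r.2 = r.1.neg) = (p.2 = p.1.neg ∧ r.2 = r.1.neg) := by
    rw [eq_iff_iff]; exact and_congr_left' (Idx.neg_eq_iff _ _)
  simp [e1]

lemma Q_mul_P (n : ℕ) : Qmat n * Pmat n = Qmat n := by
  ext p r
  simp only [Matrix.mul_apply, Pmat_apply, Qmat_apply]
  rw [Fintype.sum_eq_single (r.2, r.1) (fun q hq => by
    have : ¬(q.1 = r.2 ∧ q.2 = r.1) := fun h => hq (Prod.ext h.1 h.2)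
    simp [this])]
  have e1 : (p.2 = p.1.neg ∧ r.1 = r.2.neg) = (p.2 = p.1.neg ∧ r.2 = r.1.neg) := by
    rw [eq_iff_iff]; exact and_congr_right' (Idx.neg_eq_iff _ _)
  simp [e1]
lemma card_Idx (n : ℕ) : Fintype.card (Idx n) = 2 * n + 1 := by
  rw [Fintype.card_coe, Int.card_Icc]
  omega

lemma Q_mul_Q (n : ℕ) : Qmat n * Qmat n = ((2 * n + 1 : ℕ) : ℂ) • Qmat n := by
  ext p r
  simp only [Matrix.mul_apply, Qmat_apply, Matrix.smul_apply]
  by_cases hp : p.2 = p.1.neg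
  · by_cases hr : r.2 = r.1.neg
    · simp only [hp, hr, and_true, true_and, if_true, smul_eq_mul, mul_one]
      have : ∀ q : Idx n × Idx n, (if q.2 = q.1.neg then (1:ℂ) else 0) *
          (if q.2 = q.1.neg then (1:ℂ) else 0) = if q.2 = q.1.neg then 1 else 0 := by
        intro q; by_cases h : q.2 = q.1.neg <;> simp [h]
      calc (∑ q : Idx n × Idx n, (if q.2 = q.1.neg then (1:ℂ) else 0) *
              (if q.2 = q.1.neg then (1:ℂ) else 0))
          = ∑ q : Idx n × Idx n, if q.2 = q.1.neg then (1:ℂ) else 0 := by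
            exact Finset.sum_congr rfl (fun q _ => this q)
        _ = ∑ q1 : Idx n, ∑ q2 : Idx n, if q2 = q1.neg then (1:ℂ) else 0 := by
            rw [Fintype.sum_prod_type]
        _ = ∑ q1 : Idx n, 1 := by
            exact Finset.sum_congr rfl (fun q1 _ => by simp)
        _ = ((2 * n + 1 : ℕ) : ℂ) := by
            rw [Finset.sum_const, Finset.card_univ, card_Idx]; simp
    · simp only [hr, and_false, if_false, mul_zero, Finset.sum_const_zero, smul_zero]
  · simp only [hp, false_and, if_false, zero_mul, Finset.sum_const_zero, smul_zero]

/-- `κ = n - 1/2`. -/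
def kappa (n : ℕ) : ℂ := (n : ℂ) - 1 / 2

/-- The `o_{2n+1}`-invariant `R`-matrix
`R(u,v) = I⊗I + (c/(u−v)) P − (c/(u−v+cκ)) Q`. -/
def Rmat (n : ℕ) (c u v : ℂ) : Matrix (Idx n × Idx n) (Idx n × Idx n) ℂ :=
  1 + (c / (u - v)) • Pmat n - (c / (u - v + c * kappa n)) • Qmat n


lemma gen_prod (n : ℕ) (α β α' β' : ℂ) :
    (1 + α • Pmat n - β • Qmat n) * (1 + α' • Pmat n - β' • Qmat n)
      = (1 + α * α') • (1 : Matrix (Idx n × Idx n) (Idx n × Idx n) ℂ)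
        + (α + α') • Pmat n
        + (-β - β' - α' * β - α * β' + ((2 * n + 1 : ℕ) : ℂ) * β * β') • Qmat n := by
  simp only [sub_mul, mul_sub, add_mul, mul_add, one_mul, mul_one,
    Matrix.smul_mul, Matrix.mul_smul, P_mul_P, P_mul_Q, Q_mul_P, Q_mul_Q, smul_smul]
  module

lemma R_mul_R (n : ℕ) (c u v : ℂ) (hc : c ≠ 0) (hx : u - v ≠ 0) (hxp : u - v + c * kappa n ≠ 0)
    (hvu : v - u ≠ 0) (hvup : v - u + c * kappa n ≠ 0) :
    Rmat n c u v * Rmat n c v u = (1 - c ^ 2 / (u - v) ^ 2) •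
      (1 : Matrix (Idx n × Idx n) (Idx n × Idx n) ℂ) := by
  rw [Rmat, Rmat, gen_prod]
  have e1 : c / (u - v) + c / (v - u) = 0 := by field_simp; ring
  have hN : ((2 * n + 1 : ℕ) : ℂ) = (2 * (c * kappa n) + 2 * c) / c := by
    rw [kappa]; push_cast; field_simp; ring
  have e2 : -(c / (u - v + c * kappa n)) - c / (v - u + c * kappa n)
      - c / (v - u) * (c / (u - v + c * kappa n))
      - c / (u - v) * (c / (v - u + c * kappa n))
      + ((2 * n + 1 : ℕ) : ℂ) * (c / (u - v + c * kappa n)) * (c / (v - u + c * kappa n)) = 0 := by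
    rw [hN]
    field_simp
    ring
  have e3 : 1 + (c / (u - v)) * (c / (v - u)) = 1 - c ^ 2 / (u - v) ^ 2 := by
    field_simp; ring
  rw [e1, e2, e3, zero_smul, zero_smul, add_zero, add_zero]

lemma trace_map_comm {A : Type*} [Ring A] [Algebra ℂ A] {ι : Type*} [Fintype ι]
    (M : Matrix ι ι ℂ) (X : Matrix ι ι A) :
    Matrix.trace (M.map (algebraMap ℂ A) * X) = Matrix.trace (X * M.map (algebraMap ℂ A)) := by
  simp only [Matrix.trace, Matrix.diag, Matrix.mul_apply, Matrix.map_apply]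
  rw [Finset.sum_comm]
  exact Finset.sum_congr rfl (fun a _ => Finset.sum_congr rfl (fun b _ => Algebra.commutes _ _))

lemma trace_kron_mul {n : ℕ} {A : Type*} [Ring A] [Algebra ℂ A]
    (X Y : Matrix (Idx n) (Idx n) A) :
    Matrix.trace ((X ⊗ₖ (1 : Matrix (Idx n) (Idx n) A)) *
        ((1 : Matrix (Idx n) (Idx n) A) ⊗ₖ Y)) = (∑ i : Idx n, X i i) * (∑ j : Idx n, Y j j) := by
  simp only [Matrix.trace, Matrix.diag, Matrix.mul_apply, Matrix.kroneckerMap_apply]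
  have key : ∀ p : Idx n × Idx n,
      (∑ q : Idx n × Idx n, (X p.1 q.1 * (1 : Matrix (Idx n) (Idx n) A) p.2 q.2) *
        ((1 : Matrix (Idx n) (Idx n) A) q.1 p.1 * Y q.2 p.2)) = X p.1 p.1 * Y p.2 p.2 := by
    intro p
    rw [Fintype.sum_eq_single p (fun q hq => ?_)]
    · simp [Matrix.one_apply]
    · by_cases h2 : p.2 = q.2
      · have h1 : q.1 ≠ p.1 := fun h => hq (Prod.ext h h2.symm)
        simp [Matrix.one_apply_ne h1]
      · simp [Matrix.one_apply_ne h2]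
  rw [Finset.sum_congr rfl (fun p _ => key p), Fintype.sum_prod_type, Finset.sum_mul_sum]

lemma trace_kron_mul' {n : ℕ} {A : Type*} [Ring A] [Algebra ℂ A]
    (X Y : Matrix (Idx n) (Idx n) A) :
    Matrix.trace (((1 : Matrix (Idx n) (Idx n) A) ⊗ₖ Y) *
        (X ⊗ₖ (1 : Matrix (Idx n) (Idx n) A))) = (∑ j : Idx n, Y j j) * (∑ i : Idx n, X i i) := by
  simp only [Matrix.trace, Matrix.diag, Matrix.mul_apply, Matrix.kroneckerMap_apply]
  have key : ∀ p : Idx n × Idx n,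
      (∑ q : Idx n × Idx n, ((1 : Matrix (Idx n) (Idx n) A) p.1 q.1 * Y p.2 q.2) *
        (X q.1 p.1 * (1 : Matrix (Idx n) (Idx n) A) q.2 p.2)) = Y p.2 p.2 * X p.1 p.1 := by
    intro p
    rw [Fintype.sum_eq_single p (fun q hq => ?_)]
    · simp [Matrix.one_apply]
    · by_cases h1 : p.1 = q.1
      · have h2 : q.2 ≠ p.2 := fun h => hq (Prod.ext h1.symm h)
        simp [Matrix.one_apply_ne h2]
      · simp [Matrix.one_apply_ne h1]
  rw [Finset.sum_congr rfl (fun p _ => key p), Fintype.sum_prod_type]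
  rw [Finset.sum_mul_sum]
  rw [Finset.sum_comm]

/-- The RTT relation at `(u,v)` for a pair of matrices with entries in a
ℂ-algebra `A`: `R(u,v) T₁(u) T₂(v) = T₂(v) T₁(u) R(u,v)`. -/
def RTTrel (n : ℕ) (c u v : ℂ) {A : Type*} [Ring A] [Algebra ℂ A]
    (Tu Tv : Matrix (Idx n) (Idx n) A) : Prop :=
  (Rmat n c u v).map (algebraMap ℂ A) * (Tu ⊗ₖ (1 : Matrix (Idx n) (Idx n) A)) *
      ((1 : Matrix (Idx n) (Idx n) A) ⊗ₖ Tv) =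
    ((1 : Matrix (Idx n) (Idx n) A) ⊗ₖ Tv) * (Tu ⊗ₖ (1 : Matrix (Idx n) (Idx n) A)) *
      (Rmat n c u v).map (algebraMap ℂ A)

/-- if `T(u), T(v)` satisfy the RTT relation at `(u,v)` with
`u − v ∉ {0, c, −c, cκ, −cκ}`, then their traces commute:
`[Σ_i T_{i,i}(u), Σ_j T_{j,j}(v)] = 0`. -/
theorem statement8 (n : ℕ) (hn : 1 ≤ n) (c : ℂ) (hc : c ≠ 0)
    {A : Type*} [Ring A] [Algebra ℂ A]
    (u v : ℂ) (h0 : u - v ≠ 0) (h1 : u - v ≠ c) (h2 : u - v ≠ -c)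
    (h3 : u - v ≠ c * kappa n) (h4 : u - v ≠ -(c * kappa n))
    (Tu Tv : Matrix (Idx n) (Idx n) A)
    (hT : RTTrel n c u v Tu Tv) :
    (∑ i : Idx n, Tu i i) * (∑ j : Idx n, Tv j j) =
      (∑ j : Idx n, Tv j j) * (∑ i : Idx n, Tu i i) := by
  have hxp : u - v + c * kappa n ≠ 0 := fun h => h4 (by linear_combination h)
  have hvu : v - u ≠ 0 := fun h => h0 (by linear_combination -h)
  have hvup : v - u + c * kappa n ≠ 0 := fun h => h3 (by linear_combination -h)
  have hlam : (1 - c ^ 2 / (u - v) ^ 2) ≠ 0 := by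
    intro h
    have h2' : (u - v - c) * (u - v + c) = 0 := by
      field_simp at h
      linear_combination h
    rcases mul_eq_zero.mp h2' with h' | h'
    · exact h1 (by linear_combination h')
    · exact h2 (by linear_combination h')
  have hRR := R_mul_R n c u v hc h0 hxp hvu hvup
  rw [RTTrel] at hT
  set S : Matrix (Idx n × Idx n) (Idx n × Idx n) ℂ :=
    (1 - c ^ 2 / (u - v) ^ 2)⁻¹ • Rmat n c v u with hS
  have hRS : Rmat n c u v * S = 1 := by
    rw [hS, Matrix.mul_smul, hRR, smul_smul, inv_mul_cancel₀ hlam, one_smul]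
  have hSR : S * Rmat n c u v = 1 := mul_eq_one_comm.mp hRS
  have hmap1 : ((1 : Matrix (Idx n × Idx n) (Idx n × Idx n) ℂ)).map (algebraMap ℂ A) = 1 :=
    Matrix.map_one _ (map_zero _) (map_one _)
  have hRSm : (Rmat n c u v).map (algebraMap ℂ A) * S.map (algebraMap ℂ A) = 1 := by
    rw [← Matrix.map_mul, hRS, hmap1]
  have hSRm : S.map (algebraMap ℂ A) * (Rmat n c u v).map (algebraMap ℂ A) = 1 := by
    rw [← Matrix.map_mul, hSR, hmap1]
  set T1 := Tu ⊗ₖ (1 : Matrix (Idx n) (Idx n) A) with hT1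
  set T2 := (1 : Matrix (Idx n) (Idx n) A) ⊗ₖ Tv with hT2
  have key : T1 * T2 = S.map (algebraMap ℂ A) *
      (T2 * T1 * (Rmat n c u v).map (algebraMap ℂ A)) := by
    calc T1 * T2 = (S.map (algebraMap ℂ A) * (Rmat n c u v).map (algebraMap ℂ A)) *
          (T1 * T2) := by rw [hSRm, one_mul]
      _ = S.map (algebraMap ℂ A) * ((Rmat n c u v).map (algebraMap ℂ A) * T1 * T2) := by
          rw [mul_assoc, ← mul_assoc ((Rmat n c u v).map (algebraMap ℂ A))]
      _ = S.map (algebraMap ℂ A) *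
          (T2 * T1 * (Rmat n c u v).map (algebraMap ℂ A)) := by rw [hT]
  calc (∑ i : Idx n, Tu i i) * (∑ j : Idx n, Tv j j)
      = Matrix.trace (T1 * T2) := (trace_kron_mul Tu Tv).symm
    _ = Matrix.trace (S.map (algebraMap ℂ A) *
          (T2 * T1 * (Rmat n c u v).map (algebraMap ℂ A))) := by rw [key]
    _ = Matrix.trace ((T2 * T1 * (Rmat n c u v).map (algebraMap ℂ A)) *
          S.map (algebraMap ℂ A)) := trace_map_comm S _
    _ = Matrix.trace (T2 * T1) := by
        rw [mul_assoc (T2 * T1), hRSm, mul_one]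
    _ = (∑ j : Idx n, Tv j j) * (∑ i : Idx n, Tu i i) := trace_kron_mul' Tu Tv

end
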